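/- Let A be a nonempty finite alphabet, S a substitution on A, and ω₀ : ℤ → A a configuration. If u is a word of length 2 occurring in the configuration S(ω₀) and u is not legal for S, then there exists a word w of length 2 occurring in ω₀ such that w is not legal for S and u is an infix of S(w). -/

import Mathlib

namespace QC

variable {A : Type*}

/-- The shift action of `ℤ` on configurations: `(m · ω)(n) = ω (n - m)`. -/
def shift (m : ℤ) (ω : ℤ → A) : ℤ → A := fun n => ω (n - m)

/-- The word `u` occurs in the configuration `ω` (at some position `k`). -/
def Occurs (u : List A) (ω : ℤ → A) : Prop :=
  ∃ k : ℤ, u = (List.range u.length).map fun i => ω (k + i)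

/-- The dictionary of a configuration: all (nonempty) words occurring in it. -/
def Dict (ω : ℤ → A) : Set (List A) := {u | u ≠ [] ∧ Occurs u ω}

/-- The set of length-`ℓ` words occurring in a configuration. -/
def DictLen (ω : ℤ → A) (ℓ : ℕ) : Set (List A) := {u | u.length = ℓ ∧ Occurs u ω}

/-- The extension of a substitution rule `S : A → List A` to words, by concatenation. -/
def wordSub (S : A → List A) (u : List A) : List A := (u.map S).flatten

/-- A word is legal for `S` if it is an infix of `Sⁿ(a)` for some letter `a` and `n : ℕ`. -/
def Legal (S : A → List A) (u : List A) : Prop :=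
  ∃ (a : A) (n : ℕ), u <:+: (wordSub S)^[n] [a]

/-- `S` is primitive: some power `p ≥ 1` of `S` maps every letter to a word containing
all letters. -/
def Primitive (S : A → List A) : Prop :=
  ∃ p : ℕ, 1 ≤ p ∧ ∀ a b : A, b ∈ (wordSub S)^[p] [a]

/-- The starting position (in `S ω`) of the block coming from the letter `ω k`. -/
def blockStart (S : A → List A) (ω : ℤ → A) (k : ℤ) : ℤ :=
  if 0 ≤ k then ((List.range k.toNat).map fun i => ((S (ω i)).length : ℤ)).sum
  else -((List.range (-k).toNat).map fun i => ((S (ω (-(i : ℤ) - 1))).length : ℤ)).sum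

open Classical in
/-- The extension of a substitution to two-sided configurations: the block structure of
`S ω` is `⋯ S(ω(-1)) . S(ω 0) S(ω 1) ⋯`, with the block of `ω 0` starting at position `0`. -/
noncomputable def confSub [Nonempty A] (S : A → List A) (ω : ℤ → A) : ℤ → A := fun n =>
  if h : ∃ k : ℤ, blockStart S ω k ≤ n ∧ n < blockStart S ω (k + 1) then
    (S (ω (Classical.choose h))).getD (n - blockStart S ω (Classical.choose h)).toNat
      (Classical.arbitrary A)
  else Classical.arbitrary A

/-- The metric on configurations:
`d(ω₁, ω₂) = inf { 1/(r+1) : ω₁ and ω₂ agree on all |k| < r }`. -/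
noncomputable def confDist (ω₁ ω₂ : ℤ → A) : ℝ :=
  sInf {x : ℝ | ∃ r : ℕ, x = 1 / (r + 1) ∧ ∀ k : ℤ, |k| < (r : ℤ) → ω₁ k = ω₂ k}

/-- Distance from a configuration to a set of configurations. -/
noncomputable def distToSet (ω : ℤ → A) (Ω : Set (ℤ → A)) : ℝ :=
  sInf (confDist ω '' Ω)

/-- The Hausdorff distance between two sets of configurations, induced by `confDist`. -/
noncomputable def hausDist (Ω₁ Ω₂ : Set (ℤ → A)) : ℝ :=
  max (sSup ((fun ω => distToSet ω Ω₂) '' Ω₁)) (sSup ((fun ω => distToSet ω Ω₁) '' Ω₂))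

/-- The product topology on `ℤ → A`, where `A` carries the discrete topology. -/
def confTop (A : Type*) : TopologicalSpace (ℤ → A) :=
  @Pi.topologicalSpace ℤ (fun _ => A) fun _ => ⊥

/-- The shift orbit of a configuration. -/
def orbit (ω : ℤ → A) : Set (ℤ → A) := {η | ∃ m : ℤ, η = shift m ω}

/-- The hull of a configuration: the closure of its shift orbit in the product topology. -/
def hull (ω : ℤ → A) : Set (ℤ → A) := @closure _ (confTop A) (orbit ω)

/-- The `n`-th iterated hull `Ωₙ(ω₀)`: the hull of `Sⁿ(ω₀)`. -/
noncomputable def IHS [Nonempty A] (S : A → List A) (ω₀ : ℤ → A) (n : ℕ) : Set (ℤ → A) :=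
  hull ((confSub S)^[n] ω₀)

/-- The substitution subshift `Ω(S) = {ω : W(ω) ⊆ W(S)}`. -/
def OmegaS (S : A → List A) : Set (ℤ → A) := {ω | ∀ u ∈ Dict ω, Legal S u}

/-- Edges of the directed graph `G(S)`: `u → w` iff `u, w` are both illegal and `w` is an
infix of `S(u)`. -/
def GEdge (S : A → List A) (u w : List A) : Prop :=
  ¬Legal S u ∧ ¬Legal S w ∧ w <:+: wordSub S u

/-- `p` is a directed path of length `ℓ` in `G(S)` (on the vertex set of `2`-words). -/
def GPath (S : A → List A) (p : ℕ → List A) (ℓ : ℕ) : Prop :=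
  (∀ i ≤ ℓ, (p i).length = 2) ∧ ∀ j < ℓ, GEdge S (p j) (p (j + 1))

/-- An initial configuration is good for `S` if every directed path in `G(S)` starting at a
`2`-word occurring in `ω₀` has length `< |A|²`. -/
def GoodInit [Fintype A] (S : A → List A) (ω₀ : ℤ → A) : Prop :=
  ∀ (p : ℕ → List A) (ℓ : ℕ), GPath S p ℓ → Occurs (p 0) ω₀ → ℓ < (Fintype.card A) ^ 2

/-- The substitution matrix of `S`: `M(S)_{a,b}` is the number of occurrences of `a`
in `S(b)`. -/
def subMatrix [Fintype A] [DecidableEq A] (S : A → List A) : Matrix A A ℝ :=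
  fun a b => ((S b).count a : ℝ)

/-- The Perron–Frobenius eigenvalue of `S`: the spectral radius of its substitution
matrix (viewed as a complex matrix). -/
noncomputable def pfEigenvalue [Fintype A] [DecidableEq A] (S : A → List A) : ℝ :=
  (spectralRadius ℂ ((subMatrix S).map (algebraMap ℝ ℂ))).toReal

/-- The periodic configuration `u^∞`, satisfying `u^∞(n) = u(n mod |u|)`. -/
noncomputable def perConf [Nonempty A] (u : List A) : ℤ → A := fun n =>
  u.getD (n % (u.length : ℤ)).toNat (Classical.arbitrary A)

/-- `ℓ²(ℤ, ℂ)`. -/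
abbrev l2Z : Type := lp (fun _ : ℤ => ℂ) 2

/-- `H` is the Schrödinger operator on `ℓ²(ℤ,ℂ)` with potential `v ∘ ω`:
`(H ψ)(n) = -(ψ(n+1) + ψ(n-1) - 2ψ(n)) + v(ω(n)) ψ(n)`. -/
def IsSchrodinger (v : A → ℝ) (ω : ℤ → A) (H : l2Z →L[ℂ] l2Z) : Prop :=
  ∀ (ψ : l2Z) (n : ℤ),
    (H ψ : ℤ → ℂ) n = -((ψ : ℤ → ℂ) (n + 1) + (ψ : ℤ → ℂ) (n - 1) - 2 * (ψ : ℤ → ℂ) n)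
      + (v (ω n) : ℂ) * (ψ : ℤ → ℂ) n

/-- The spectrum of `H`, viewed as a subset of `ℝ`. -/
def realSpectrum (H : l2Z →L[ℂ] l2Z) : Set ℝ := {x : ℝ | (x : ℂ) ∈ spectrum ℂ H}


lemma blockStart_succ (S : A → List A) (ω : ℤ → A) (k : ℤ) :
    blockStart S ω (k + 1) = blockStart S ω k + ((S (ω k)).length : ℤ) := by
  rcases le_or_gt 0 k with hk | hk
  · have h1 : (0:ℤ) ≤ k + 1 := by omega
    have h2 : (k+1).toNat = k.toNat + 1 := by omega
    have h3 : (k.toNat : ℤ) = k := Int.toNat_of_nonneg hk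
    simp [blockStart, if_pos hk, if_pos h1, h2, List.range_succ, h3]
  · rcases eq_or_lt_of_le (by omega : k + 1 ≤ 0) with h0 | h0
    · have hk1 : k = -1 := by omega
      subst hk1
      simp [blockStart, List.range_succ]
    · have h2 : (-k).toNat = (-(k+1)).toNat + 1 := by omega
      simp [blockStart, if_neg (by omega : ¬ (0:ℤ) ≤ k), if_neg (by omega : ¬ (0:ℤ) ≤ k+1),
        h2, List.range_succ]
      have h4 : ((-1 + -k : ℤ) ⊔ 0) = -1 + -k := by rw [sup_eq_left]; omega
      rw [h4]
      have h5 : (-(-1 + -k) - 1 : ℤ) = k := by omega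
      rw [h5]
      ring

lemma blockStart_zero (S : A → List A) (ω : ℤ → A) : blockStart S ω 0 = 0 := by
  simp [blockStart]

lemma blockStart_strictMono (S : A → List A) (hS : ∀ a, S a ≠ []) (ω : ℤ → A) :
    StrictMono (blockStart S ω) := by
  apply strictMono_int_of_lt_succ
  intro k
  rw [blockStart_succ]
  have := List.length_pos_iff.mpr (hS (ω k))
  omega

lemma le_blockStart (S : A → List A) (hS : ∀ a, S a ≠ []) (ω : ℤ → A) :
    ∀ k : ℤ, 0 ≤ k → k ≤ blockStart S ω k := by
  intro k hk
  refine Int.le_induction (motive := fun k _ => k ≤ blockStart S ω k) ?_ ?_ k hk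
  · simp [blockStart_zero]
  · intro k hk ih
    rw [blockStart_succ]
    have := List.length_pos_iff.mpr (hS (ω k))
    omega

lemma blockStart_le (S : A → List A) (hS : ∀ a, S a ≠ []) (ω : ℤ → A) :
    ∀ k : ℤ, k ≤ 0 → blockStart S ω k ≤ k := by
  intro k hk
  refine Int.le_induction_down (motive := fun k _ => blockStart S ω k ≤ k) ?_ ?_ k hk
  · simp [blockStart_zero]
  · intro k hk ih
    have h := blockStart_succ S ω (k - 1)
    rw [sub_add_cancel] at h
    have := List.length_pos_iff.mpr (hS (ω (k-1)))
    omega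

lemma exists_block (S : A → List A) (hS : ∀ a, S a ≠ []) (ω : ℤ → A) (n : ℤ) :
    ∃ k : ℤ, blockStart S ω k ≤ n ∧ n < blockStart S ω (k + 1) := by
  obtain ⟨k, hk, hmax⟩ := Int.exists_greatest_of_bdd
    (P := fun k => blockStart S ω k ≤ n)
    ⟨max n 0, by
      intro z hz
      rcases le_or_gt 0 z with h | h
      · have := le_blockStart S hS ω z h; omega
      · omega⟩
    ⟨min n 0, by
      have := blockStart_le S hS ω (min n 0) (by omega)
      omega⟩
  refine ⟨k, hk, ?_⟩
  by_contra h
  have := hmax (k + 1) (by omega)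
  omega

lemma confSub_eq [Nonempty A] (S : A → List A) (hS : ∀ a, S a ≠ []) (ω : ℤ → A) {k n : ℤ}
    (h1 : blockStart S ω k ≤ n) (h2 : n < blockStart S ω (k + 1)) :
    confSub S ω n
      = (S (ω k)).getD (n - blockStart S ω k).toNat (Classical.arbitrary A) := by
  have h : ∃ k : ℤ, blockStart S ω k ≤ n ∧ n < blockStart S ω (k + 1) := ⟨k, h1, h2⟩
  rw [confSub, dif_pos h]
  obtain ⟨h1', h2'⟩ := Classical.choose_spec h
  have hk : Classical.choose h = k := by
    by_contra hne
    rcases lt_or_gt_of_ne hne with hlt | hlt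
    · have := (blockStart_strictMono S hS ω).monotone (by omega : Classical.choose h + 1 ≤ k)
      omega
    · have := (blockStart_strictMono S hS ω).monotone (by omega : k + 1 ≤ Classical.choose h)
      omega
  rw [hk]

lemma wordSub_append (S : A → List A) (x y : List A) :
    wordSub S (x ++ y) = wordSub S x ++ wordSub S y := by
  simp [wordSub]

lemma wordSub_infix (S : A → List A) {u v : List A} (h : u <:+: v) :
    wordSub S u <:+: wordSub S v := by
  obtain ⟨s, t, rfl⟩ := h
  exact ⟨wordSub S s, wordSub S t, by simp [wordSub_append]⟩

lemma pair_infix_of_lt {A : Type*} (l : List A) (i : ℕ) (h : i + 1 < l.length) :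
    [l[i], l[i + 1]] <:+: l := by
  have hdrop : l.drop i = l[i] :: l[i + 1] :: l.drop (i + 2) := by
    rw [List.drop_eq_getElem_cons (by omega), List.drop_eq_getElem_cons (by omega)]
  have hpre : [l[i], l[i + 1]] <+: l.drop i := by
    rw [hdrop]; exact ⟨l.drop (i + 2), rfl⟩
  exact hpre.isInfix.trans (l.drop_suffix i).isInfix

lemma pair_infix_append {A : Type*} (l₁ l₂ : List A) (i : ℕ) (h1 : i + 1 = l₁.length)
    (h2 : 0 < l₂.length) :
    [l₁[i]'(by omega), l₂[0]'h2] <:+: l₁ ++ l₂ := by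
  have hd1 : l₁.drop i = [l₁[i]'(by omega)] := by
    rw [List.drop_eq_getElem_cons (by omega)]
    congr 1
    rw [h1, List.drop_length]
  have hd2 : l₂ = l₂[0]'h2 :: l₂.drop 1 := by
    simpa using List.drop_eq_getElem_cons h2
  have hdrop : (l₁ ++ l₂).drop i = l₁[i]'(by omega) :: l₂[0]'h2 :: l₂.drop 1 := by
    rw [List.drop_append, hd1, show i - l₁.length = 0 by omega,
      List.drop_zero, List.singleton_append, ← hd2]
  have hpre : [l₁[i]'(by omega), l₂[0]'h2] <+: (l₁ ++ l₂).drop i := by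
    rw [hdrop]; exact ⟨l₂.drop 1, rfl⟩
  exact hpre.isInfix.trans ((l₁ ++ l₂).drop_suffix i).isInfix

/-- an illegal `2`-word occurring in `S(ω₀)` comes from an illegal `2`-word
occurring in `ω₀`. -/
theorem stmt3 {A : Type*} [Fintype A] [Nonempty A] (S : A → List A) (hS : ∀ a, S a ≠ [])
    (ω₀ : ℤ → A) (u : List A) (hu : u.length = 2)
    (hocc : Occurs u (confSub S ω₀)) (hu_illegal : ¬Legal S u) :
    ∃ w : List A, w.length = 2 ∧ Occurs w ω₀ ∧ ¬Legal S w ∧ u <:+: wordSub S w := by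
  obtain ⟨n, hn⟩ := hocc
  rw [hu] at hn
  have hn' : u = [confSub S ω₀ n, confSub S ω₀ (n + 1)] := by
    rw [hn]; simp [List.range_succ]
  clear hn
  obtain ⟨k, hk1, hk2⟩ := exists_block S hS ω₀ n
  have hbs : blockStart S ω₀ (k + 1) = blockStart S ω₀ k + ((S (ω₀ k)).length : ℤ) :=
    blockStart_succ S ω₀ k
  have hbs2 : blockStart S ω₀ (k + 1 + 1)
      = blockStart S ω₀ (k + 1) + ((S (ω₀ (k + 1))).length : ℤ) :=
    blockStart_succ S ω₀ (k + 1)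
  have hlen1 : 0 < (S (ω₀ k)).length := List.length_pos_iff.mpr (hS _)
  have hlen2 : 0 < (S (ω₀ (k + 1))).length := List.length_pos_iff.mpr (hS _)
  have hv1 := confSub_eq S hS ω₀ hk1 hk2
  obtain ⟨i, hi⟩ : ∃ i : ℕ, (i : ℤ) = n - blockStart S ω₀ k :=
    ⟨(n - blockStart S ω₀ k).toNat, Int.toNat_of_nonneg (by omega)⟩
  have hmi : (n - blockStart S ω₀ k).toNat = i := by omega
  rw [hmi] at hv1
  have hilt : i < (S (ω₀ k)).length := by omega
  have hget1 : confSub S ω₀ n = (S (ω₀ k))[i]'hilt := by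
    rw [hv1]; exact List.getD_eq_getElem _ _ hilt
  rcases lt_or_ge (n + 1) (blockStart S ω₀ (k + 1)) with hin | hout
  · -- both letters inside the block of ω₀ k : u is legal, contradiction
    exfalso
    apply hu_illegal
    have hv2 := confSub_eq S hS ω₀ (k := k) (n := n + 1) (by omega) hin
    have hi1 : i + 1 < (S (ω₀ k)).length := by omega
    have hi2 : (n + 1 - blockStart S ω₀ k).toNat = i + 1 := by omega
    rw [hi2] at hv2
    have hget2 : confSub S ω₀ (n + 1) = (S (ω₀ k))[i + 1]'hi1 := by
      rw [hv2]; exact List.getD_eq_getElem _ _ hi1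
    have hinf : u <:+: S (ω₀ k) := by
      rw [hn', hget1, hget2]
      exact pair_infix_of_lt _ i hi1
    exact ⟨ω₀ k, 1, by simpa [wordSub] using hinf⟩
  · -- u straddles the blocks of ω₀ k and ω₀ (k+1)
    have heq : blockStart S ω₀ (k + 1) = n + 1 := by omega
    have hv2 := confSub_eq S hS ω₀ (k := k + 1) (n := n + 1) (by omega) (by omega)
    have hni : (n + 1 - blockStart S ω₀ (k + 1)).toNat = 0 := by omega
    rw [hni] at hv2
    have hmlen : i + 1 = (S (ω₀ k)).length := by omega
    have hget2 : confSub S ω₀ (n + 1) = (S (ω₀ (k + 1)))[0]'hlen2 := by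
      rw [hv2]; exact List.getD_eq_getElem _ _ hlen2
    have hw : wordSub S [ω₀ k, ω₀ (k + 1)] = S (ω₀ k) ++ S (ω₀ (k + 1)) := by
      simp [wordSub]
    have hinf : u <:+: wordSub S [ω₀ k, ω₀ (k + 1)] := by
      rw [hw, hn', hget1, hget2]
      exact pair_infix_append _ _ i hmlen hlen2
    refine ⟨[ω₀ k, ω₀ (k + 1)], rfl, ⟨k, by simp [List.range_succ]⟩, ?_, hinf⟩
    rintro ⟨a, p, hleg⟩
    apply hu_illegal
    refine ⟨a, p + 1, ?_⟩
    rw [Function.iterate_succ_apply']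
    exact hinf.trans (wordSub_infix S hleg)

end QC
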